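/- Let H be a finite graph (loops allowed) with maximum degree Δ, let G be a connected finite simple graph on n vertices, and suppose that G contains the path P_k on k vertices (1 ≤ k ≤ n) as a (not necessarily induced) subgraph. Then hom(G,H) ≤ hom(P_k,H)·Δ^{n−k}. -/

import Mathlib

/-- The number of `H`-colorings of a simple graph `G`, where the target graph (with loops
allowed) is given by a symmetric adjacency relation `H` on its vertex type. -/
noncomputable def homCount {α β : Type*} (G : SimpleGraph α) (H : β → β → Prop) : ℕ :=
  Nat.card {f : α → β // ∀ ⦃u v⦄, G.Adj u v → H (f u) (f v)}

/-- The degree of a vertex in a graph with loops allowed (a loop adds one to the degree). -/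
noncomputable def relDegree {β : Type*} (H : β → β → Prop) (v : β) : ℕ :=
  Nat.card {w : β // H v w}

/-- The maximum degree of a finite graph with loops allowed. -/
noncomputable def relMaxDegree {β : Type*} [Fintype β] (H : β → β → Prop) : ℕ :=
  Finset.univ.sup fun v => relDegree H v

/-- Along a walk from inside `S` to outside `S` there is an edge leaving `S`. -/
lemma HomCountAux.walk_crossing {α : Type*} {G : SimpleGraph α} (S : Finset α) :
    ∀ {x y : α}, G.Walk x y → x ∈ S → y ∉ S → ∃ v ∈ S, ∃ w, w ∉ S ∧ G.Adj v w := by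
  intro x y p
  induction p with
  | nil => intro hx hy; exact absurd hx hy
  | @cons a b c h p ih =>
    intro hx hy
    by_cases hb : b ∈ S
    · exact ih hb hy
    · exact ⟨a, hx, b, hb, h⟩

/-- In a connected graph, any nonempty proper vertex subset has an outgoing edge. -/
lemma HomCountAux.exists_boundary {α : Type*} [Fintype α] {G : SimpleGraph α}
    (hG : G.Connected) (S : Finset α) (hS : S.Nonempty) (hS' : S ≠ Finset.univ) :
    ∃ v ∈ S, ∃ w, w ∉ S ∧ G.Adj v w := by
  obtain ⟨x, hx⟩ := hS
  obtain ⟨y, hy⟩ : ∃ y, y ∉ S := by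
    by_contra h; push_neg at h; exact hS' (Finset.eq_univ_iff_forall.2 h)
  obtain ⟨p⟩ := hG.preconnected x y
  exact HomCountAux.walk_crossing S p hx hy

open Classical in
/-- Add to `S` a new vertex adjacent to `S`, if one exists. -/
noncomputable def HomCountAux.growStep {α : Type*} (G : SimpleGraph α) (S : Finset α) :
    Finset α :=
  if h : ∃ w, w ∉ S ∧ ∃ v ∈ S, G.Adj v w then insert h.choose S else S

/-- Iterate `growStep` starting from `S₀`. -/
noncomputable def HomCountAux.grow {α : Type*} (G : SimpleGraph α) (S₀ : Finset α) :
    ℕ → Finset α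
  | 0 => S₀
  | m + 1 => HomCountAux.growStep G (HomCountAux.grow G S₀ m)

/-- In a connected graph on `n` vertices containing an injective copy of a `k`-vertex set,
there is an enumeration of all vertices starting with the given `k` vertices such that every
later vertex has an earlier neighbor. -/
lemma HomCountAux.exists_good_enum {α : Type*} [Fintype α] {G : SimpleGraph α} {n k : ℕ}
    (hcard : Fintype.card α = n) (hk : 1 ≤ k) (hkn : k ≤ n) (hG : G.Connected)
    (u : Fin k → α) (hu : Function.Injective u) :
    ∃ e : Fin n → α, Function.Injective e ∧
      (∀ i : Fin k, e ⟨i.1, lt_of_lt_of_le i.2 hkn⟩ = u i) ∧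
      (∀ i : Fin n, k ≤ i.1 → ∃ j : Fin n, j < i ∧ G.Adj (e j) (e i)) := by
  classical
  set S₀ : Finset α := Finset.univ.image u with hS₀
  have hS₀card : S₀.card = k := by
    rw [hS₀, Finset.card_image_of_injective _ hu, Finset.card_univ, Fintype.card_fin]
  set Sm : ℕ → Finset α := HomCountAux.grow G S₀ with hSm
  have hbd : ∀ m, (Sm m).card = k + m → k + m < n →
      ∃ w, w ∉ Sm m ∧ ∃ v ∈ Sm m, G.Adj v w := by
    intro m hc hlt
    have hne : Sm m ≠ Finset.univ := by
      intro h
      rw [h, Finset.card_univ, hcard] at hc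
      omega
    have hnonempty : (Sm m).Nonempty := Finset.card_pos.mp (by omega)
    obtain ⟨v, hv, w, hw, hadj⟩ := HomCountAux.exists_boundary hG _ hnonempty hne
    exact ⟨w, hw, v, hv, hadj⟩
  have key : ∀ m, m ≤ n - k → (Sm m).card = k + m := by
    intro m
    induction m with
    | zero => intro _; show S₀.card = k + 0; simpa using hS₀card
    | succ m ih =>
      intro hm
      have hc := ih (by omega)
      have hp := hbd m hc (by omega)
      show (HomCountAux.growStep G (Sm m)).card = _
      rw [HomCountAux.growStep, dif_pos hp,
        Finset.card_insert_of_notMem hp.choose_spec.1, hc]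
      omega
  have hprop : ∀ m, m < n - k → ∃ w, w ∉ Sm m ∧ ∃ v ∈ Sm m, G.Adj v w :=
    fun m hm => hbd m (key m (by omega)) (by omega)
  set w : ℕ → α := fun m =>
    if hm : m < n - k then (hprop m hm).choose else u ⟨0, hk⟩ with hwdef
  have hw_notmem : ∀ m (hm : m < n - k), w m ∉ Sm m := by
    intro m hm
    rw [hwdef]; simp only [dif_pos hm]
    exact (hprop m hm).choose_spec.1
  have hw_adj : ∀ m (hm : m < n - k), ∃ v ∈ Sm m, G.Adj v (w m) := by
    intro m hm
    rw [hwdef]; simp only [dif_pos hm]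
    exact (hprop m hm).choose_spec.2
  have hS_succ : ∀ m (hm : m < n - k), Sm (m + 1) = insert (w m) (Sm m) := by
    intro m hm
    show HomCountAux.growStep G (Sm m) = _
    rw [HomCountAux.growStep, dif_pos (hprop m hm), hwdef]
    simp only [dif_pos hm]
  have hmono : ∀ {m m'}, m ≤ m' → Sm m ⊆ Sm m' := by
    have h1 : ∀ m, Sm m ⊆ Sm (m + 1) := by
      intro m
      show Sm m ⊆ HomCountAux.growStep G (Sm m)
      rw [HomCountAux.growStep]
      split
      · exact Finset.subset_insert _ _
      · exact Finset.Subset.refl _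
    intro m m' h
    exact monotone_nat_of_le_succ (f := Sm) (fun a => h1 a) h
  have hmem : ∀ m, m ≤ n - k → ∀ x, x ∈ Sm m ↔
      (∃ i : Fin k, u i = x) ∨ ∃ m' < m, w m' = x := by
    intro m
    induction m with
    | zero =>
      intro _ x
      simp [hSm, HomCountAux.grow, hS₀, eq_comm]
    | succ m ih =>
      intro hm x
      rw [hS_succ m (by omega), Finset.mem_insert, ih (by omega)]
      constructor
      · rintro (h | h | ⟨m', hm', h⟩)
        · exact Or.inr ⟨m, by omega, h.symm⟩
        · exact Or.inl h
        · exact Or.inr ⟨m', by omega, h⟩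
      · rintro (h | ⟨m', hm', h⟩)
        · exact Or.inr (Or.inl h)
        · rcases Nat.lt_succ_iff_lt_or_eq.mp hm' with h' | h'
          · exact Or.inr (Or.inr ⟨m', h', h⟩)
          · subst h'; exact Or.inl h.symm
  refine ⟨fun i => if h : i.1 < k then u ⟨i.1, h⟩ else w (i.1 - k), ?_, ?_, ?_⟩
  · set e : Fin n → α := fun i => if h : i.1 < k then u ⟨i.1, h⟩ else w (i.1 - k) with he
    have hlt_ne : ∀ i j : Fin n, i.1 < j.1 → e i ≠ e j := by
      intro i j hij
      by_cases hjk : j.1 < k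
      · have hik : i.1 < k := by omega
        rw [he]; simp only [dif_pos hik, dif_pos hjk]
        intro h
        have := hu h
        simp only [Fin.mk.injEq] at this
        omega
      · have hmlt : j.1 - k < n - k := by omega
        have hnot := hw_notmem (j.1 - k) hmlt
        have hin : e i ∈ Sm (j.1 - k) := by
          by_cases hik : i.1 < k
          · rw [he]; simp only [dif_pos hik]
            have : u ⟨i.1, hik⟩ ∈ Sm 0 := by
              show _ ∈ S₀
              rw [hS₀]
              exact Finset.mem_image_of_mem _ (Finset.mem_univ _)
            exact hmono (Nat.zero_le _) this
          · rw [he]; simp only [dif_neg hik]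
            have hm'lt : i.1 - k < n - k := by omega
            have : w (i.1 - k) ∈ Sm (i.1 - k + 1) := by
              rw [hS_succ _ hm'lt]; exact Finset.mem_insert_self _ _
            exact hmono (by omega) this
        intro h
        rw [he] at h
        simp only [dif_neg hjk] at h
        rw [← h] at hnot
        exact hnot hin
    intro i j h
    by_contra hne
    rcases Nat.lt_or_ge i.1 j.1 with h' | h'
    · exact hlt_ne i j h' h
    · rcases Nat.lt_or_ge j.1 i.1 with h'' | h''
      · exact hlt_ne j i h'' h.symm
      · exact hne (Fin.ext (by omega))
  · intro i
    simp only [dif_pos i.2]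
  · intro i hik
    have hmlt : i.1 - k < n - k := by omega
    obtain ⟨v, hv, hadj⟩ := hw_adj (i.1 - k) hmlt
    have hei : (if h : i.1 < k then u ⟨i.1, h⟩ else w (i.1 - k)) = w (i.1 - k) := by
      simp only [dif_neg (by omega : ¬ i.1 < k)]
    rcases (hmem (i.1 - k) (by omega) v).mp hv with ⟨i', hi'⟩ | ⟨m', hm', hwm'⟩
    · refine ⟨⟨i'.1, by omega⟩, by simp [Fin.lt_def]; omega, ?_⟩
      simp only [dif_pos (i'.2 : i'.1 < k), hei]
      rw [show (⟨i'.1, i'.2⟩ : Fin k) = i' from Fin.ext rfl, hi']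
      exact hadj
    · refine ⟨⟨k + m', by omega⟩, by simp [Fin.lt_def]; omega, ?_⟩
      simp only [dif_neg (by omega : ¬ k + m' < k), hei]
      rw [show k + m' - k = m' from by omega, hwm']
      exact hadj

/-- Injectivity of neighborhood encodings, stated so it can be applied without a
dependent rewrite. -/
lemma HomCountAux.enc_inj {β : Type*} {Δ : ℕ} {H : β → β → Prop}
    (ι : ∀ v : β, {w // H v w} → Fin Δ) (hι : ∀ v, Function.Injective (ι v))
    {v v' a b : β} (hv : v = v') (ha : H v a) (hb : H v' b)
    (h : ι v ⟨a, ha⟩ = ι v' ⟨b, hb⟩) : a = b := by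
  subst hv
  exact congrArg Subtype.val (hι v h)

/-- If `H` is a finite graph (loops allowed) with maximum degree `Δ` and `G` is a connected
simple graph on `n` vertices containing the path `P_k` (`1 ≤ k ≤ n`) as a subgraph, then
`hom(G,H) ≤ hom(P_k,H)·Δ^{n-k}`. -/
theorem homCount_le_of_pathGraph_subgraph {α β : Type*} [Fintype α] [Fintype β]
    (H : β → β → Prop) (hSymm : Symmetric H)
    (G : SimpleGraph α) (n k : ℕ) (hcard : Fintype.card α = n)
    (hk : 1 ≤ k) (hkn : k ≤ n) (hGconn : G.Connected)
    (hpath : ∃ u : Fin k → α, Function.Injective u ∧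
      ∀ ⦃i j : Fin k⦄, (SimpleGraph.pathGraph k).Adj i j → G.Adj (u i) (u j)) :
    homCount G H ≤ homCount (SimpleGraph.pathGraph k) H * relMaxDegree H ^ (n - k) := by
  classical
  obtain ⟨u, hu, huadj⟩ := hpath
  obtain ⟨e, he_inj, he_path, he_nb⟩ :=
    HomCountAux.exists_good_enum hcard hk hkn hGconn u hu
  set Δ := relMaxDegree H with hΔ
  have he_surj : Function.Surjective e := by
    have hbij : Function.Bijective e :=
      (Fintype.bijective_iff_injective_and_card e).2 ⟨he_inj, by simp [hcard]⟩
    exact hbij.2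
  have hemb : ∀ v : β, ∃ ι : {w // H v w} → Fin Δ, Function.Injective ι := by
    intro v
    have hc : Fintype.card {w // H v w} ≤ Fintype.card (Fin Δ) := by
      rw [Fintype.card_fin, ← Nat.card_eq_fintype_card]
      exact Finset.le_sup (f := fun v => relDegree H v) (Finset.mem_univ v)
    obtain ⟨emb⟩ := Function.Embedding.nonempty_of_card_le hc
    exact ⟨emb, emb.injective⟩
  choose ι hι using hemb
  choose nb hnb_lt hnb_adj using he_nb
  have hkm : ∀ m : Fin (n - k), k ≤ ((⟨k + m.1, by omega⟩ : Fin n)).1 :=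
    fun m => Nat.le_add_right k m.1
  set idx : Fin (n - k) → Fin n := fun m => ⟨k + m.1, by omega⟩ with hidxdef
  set Φ : {f : α → β // ∀ ⦃a b⦄, G.Adj a b → H (f a) (f b)} →
      {g : Fin k → β // ∀ ⦃i j⦄, (SimpleGraph.pathGraph k).Adj i j → H (g i) (g j)} ×
      (Fin (n - k) → Fin Δ) := fun f =>
    (⟨fun i => f.1 (u i), fun i j hij => f.2 (huadj hij)⟩,
     fun m => ι (f.1 (e (nb (idx m) (hkm m))))
       ⟨f.1 (e (idx m)), f.2 (hnb_adj (idx m) (hkm m))⟩) with hΦdef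
  have hΦinj : Function.Injective Φ := by
    intro f g hfg
    have h1 : ∀ i : Fin k, f.1 (u i) = g.1 (u i) := by
      intro i
      exact congrFun (congrArg (fun p => (Prod.fst p).1) hfg) i
    have h2 : ∀ m : Fin (n - k),
        ι (f.1 (e (nb (idx m) (hkm m)))) ⟨f.1 (e (idx m)), f.2 (hnb_adj (idx m) (hkm m))⟩ =
        ι (g.1 (e (nb (idx m) (hkm m)))) ⟨g.1 (e (idx m)), g.2 (hnb_adj (idx m) (hkm m))⟩ := by
      intro m
      exact congrFun (congrArg Prod.snd hfg) m
    have key : ∀ N : ℕ, ∀ i : Fin n, i.1 = N → f.1 (e i) = g.1 (e i) := by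
      intro N
      induction N using Nat.strong_induction_on with
      | _ N IH =>
        intro i hiN
        by_cases hik : i.1 < k
        · have heq : e i = u ⟨i.1, hik⟩ := by
            have := he_path ⟨i.1, hik⟩
            rwa [show (⟨(⟨i.1, hik⟩ : Fin k).1,
              lt_of_lt_of_le (⟨i.1, hik⟩ : Fin k).2 hkn⟩ : Fin n) = i from Fin.ext rfl] at this
          rw [heq]
          exact h1 ⟨i.1, hik⟩
        · push_neg at hik
          set m : Fin (n - k) := ⟨i.1 - k, by omega⟩ with hm
          have hidx : idx m = i := Fin.ext (by simp [hidxdef, hm]; omega)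
          have hvlt : (nb (idx m) (hkm m)).1 < N := by
            have h3 := hnb_lt (idx m) (hkm m)
            rw [Fin.lt_def] at h3
            have h4 : ((idx m) : ℕ) = N := by rw [hidx, hiN]
            omega
          have hv : f.1 (e (nb (idx m) (hkm m))) = g.1 (e (nb (idx m) (hkm m))) :=
            IH _ hvlt _ rfl
          have := HomCountAux.enc_inj ι hι hv (f.2 (hnb_adj (idx m) (hkm m)))
            (g.2 (hnb_adj (idx m) (hkm m))) (h2 m)
          rw [← hidx]
          exact this
    apply Subtype.ext
    funext x
    obtain ⟨i, rfl⟩ := he_surj x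
    exact key i.1 i rfl
  have hle := Nat.card_le_card_of_injective Φ hΦinj
  calc homCount G H
      ≤ Nat.card ({g : Fin k → β // ∀ ⦃i j⦄, (SimpleGraph.pathGraph k).Adj i j → H (g i) (g j)} ×
          (Fin (n - k) → Fin Δ)) := hle
    _ = homCount (SimpleGraph.pathGraph k) H * Δ ^ (n - k) := by
        rw [Nat.card_prod]
        congr 1
        simp [Nat.card_eq_fintype_card]
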